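/- arXiv:1910.11080 — 2 statements merged into one kernel-verified Lean document; each statement's English description precedes it below -/
import Mathlib

section
/- If a collection 𝒜 of subsets of a set X has VC-dimension d < ∞, then for every finite subset B ⊆ X, the number of distinct intersections {A ∩ B : A ∈ 𝒜} is at most ∑_{i=0}^{d} (|B| choose i). -/
open Finset
open scoped ENNReal

variable {X : Type*}

/-- `𝒜` shatters the finite set `B` if every subset of `B` is a trace of some `A ∈ 𝒜`. -/
def Shatters (𝒜 : Set (Set X)) (B : Finset X) : Prop :=
  ∀ s : Finset X, s ⊆ B → ∃ A ∈ 𝒜, A ∩ (B : Set X) = ↑s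

/-- The number of distinct traces of members of `𝒜` on the finite set `B`. -/
noncomputable def traceCard (𝒜 : Set (Set X)) (B : Finset X) : ℕ :=
  Set.ncard {s : Set X | ∃ A ∈ 𝒜, s = A ∩ ↑B}

/-- The growth function: maximal number of traces on a set of size `n`. -/
noncomputable def tau (𝒜 : Set (Set X)) (n : ℕ) : ℕ :=
  sSup {t : ℕ | ∃ B : Finset X, B.card = n ∧ traceCard 𝒜 B = t}

/-- VC dimension: supremum of sizes of shattered finite sets. -/
noncomputable def VCdim (𝒜 : Set (Set X)) : ℕ∞ :=
  ⨆ (B : Finset X) (_ : Shatters 𝒜 B), (B.card : ℕ∞)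

/-- VC density: infimum of exponents `q` such that `tau 𝒜 n = O(n^q)`. -/
noncomputable def vcDensity (𝒜 : Set (Set X)) : ℝ≥0∞ :=
  sInf {q : ℝ≥0∞ | q ≠ ⊤ ∧
    ∃ C : ℝ, ∀ n : ℕ, 1 ≤ n → (tau 𝒜 n : ℝ) ≤ C * (n : ℝ) ^ q.toReal}

/-- Sauer–Shelah: if the VC dimension is a finite `d`, the number of traces on any
finite `B` is at most `∑_{i=0}^d (|B| choose i)`. -/
theorem stmt_0 (𝒜 : Set (Set X)) (d : ℕ) (hd : VCdim 𝒜 = (d : ℕ∞)) (B : Finset X) :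
    traceCard 𝒜 B ≤ ∑ i ∈ Finset.range (d + 1), (B.card).choose i := by
  classical
  -- The finite family of traces, as a `Finset (Finset X)`.
  set 𝒯 : Finset (Finset X) :=
    B.powerset.filter (fun t => ∃ A ∈ 𝒜, A ∩ (B : Set X) = ↑t) with h𝒯
  -- The trace set is the image of `𝒯` under coercion.
  have himg : {s : Set X | ∃ A ∈ 𝒜, s = A ∩ ↑B}
      = (fun t : Finset X => (t : Set X)) '' ↑𝒯 := by
    ext s
    constructor
    · rintro ⟨A, hA, rfl⟩
      refine ⟨B.filter (· ∈ A), ?_, ?_⟩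
      · simp only [h𝒯, coe_filter, Set.mem_setOf_eq, mem_powerset]
        refine ⟨filter_subset _ _, A, hA, ?_⟩
        ext x; simp [and_comm]
      · ext x; simp [and_comm]
    · rintro ⟨t, ht, rfl⟩
      simp only [h𝒯, coe_filter, Set.mem_setOf_eq, mem_powerset] at ht
      obtain ⟨-, A, hA, hAt⟩ := ht
      exact ⟨A, hA, hAt.symm⟩
  have hcard : traceCard 𝒜 B = 𝒯.card := by
    rw [traceCard, himg, Set.ncard_image_of_injective _ Finset.coe_injective]
    simp [Set.ncard_coe_finset]
  -- Every set shattered by `𝒯` has cardinality at most `d`.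
  have hsh : ∀ s ∈ 𝒯.shatterer, s ⊆ B ∧ s.card ≤ d := by
    intro s hs
    rw [Finset.mem_shatterer] at hs
    obtain ⟨u, hu, hsu⟩ := hs.exists_superset
    have huB : u ⊆ B := mem_powerset.1 (mem_filter.1 hu).1
    have hsB : s ⊆ B := hsu.trans huB
    refine ⟨hsB, ?_⟩
    -- `𝒜` shatters `s` in the `Set` sense.
    have hshat : Shatters 𝒜 s := by
      intro t ht
      obtain ⟨v, hv, hsv⟩ := hs ht
      obtain ⟨-, A, hA, hAv⟩ := by
        simpa only [h𝒯, mem_filter, mem_powerset] using hv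
      refine ⟨A, hA, ?_⟩
      have : A ∩ (s : Set X) = (s : Set X) ∩ (A ∩ (B : Set X)) := by
        ext x
        simp only [Set.mem_inter_iff, Finset.mem_coe]
        exact ⟨fun ⟨h1, h2⟩ => ⟨h2, h1, hsB h2⟩, fun ⟨h1, h2, _⟩ => ⟨h2, h1⟩⟩
      rw [this, hAv, ← Finset.coe_inter, hsv]
    have : (s.card : ℕ∞) ≤ VCdim 𝒜 := by
      refine le_trans ?_ (le_iSup _ s)
      exact le_iSup (fun _ : Shatters 𝒜 s => (s.card : ℕ∞)) hshat
    rw [hd, Nat.cast_le] at this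
    exact this
  -- Now count.
  rw [hcard]
  calc 𝒯.card ≤ 𝒯.shatterer.card := Finset.card_le_card_shatterer 𝒯
    _ ≤ ((Finset.Iic d).biUnion fun k => B.powersetCard k).card := by
        refine Finset.card_le_card fun s hs => ?_
        obtain ⟨hsB, hsd⟩ := hsh s hs
        exact Finset.mem_biUnion.2 ⟨s.card, Finset.mem_Iic.2 hsd,
          Finset.mem_powersetCard.2 ⟨hsB, rfl⟩⟩
    _ ≤ ∑ k ∈ Finset.Iic d, (B.powersetCard k).card := Finset.card_biUnion_le
    _ = ∑ i ∈ Finset.range (d + 1), (B.card).choose i := by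
        have : Finset.Iic d = Finset.range (d + 1) := by
          ext x; simp [Nat.lt_succ_iff]
        rw [this]
        exact Finset.sum_congr rfl fun i _ => Finset.card_powersetCard i B
end

section
/- (Massart's Lemma) Let A be a finite nonempty set of vectors in ℝ^k, each of norm at most r, and let ā be their mean (or any fixed centering). Then the Rademacher complexity E_σ[ (1/k) · max_{a ∈ A} ∑_{i=1}^k σ_i a_i ], where σ_i are independent uniform ±1 random variables, is at most (r/k)·√(2·log|A|). -/
open Finset

/-- The Rademacher complexity of a finite set `A ⊆ ℝ^k`: the average over all sign
vectors `σ ∈ {−1,1}^k` of `(1/k)·max_{a ∈ A} ⟨σ, a⟩`. -/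
noncomputable def radComplexity (k : ℕ) (A : Finset (Fin k → ℝ)) (hA : A.Nonempty) : ℝ :=
  (1 / 2 ^ k) * ∑ σ : Fin k → Bool,
    (1 / (k : ℝ)) * A.sup' hA (fun a => ∑ i, (if σ i then (1:ℝ) else -1) * a i)

-- sum over sign vectors is invariant under global sign flip
lemma sum_bool_neg {k : ℕ} (f : (Fin k → Bool) → ℝ) :
    ∑ σ : Fin k → Bool, f σ = ∑ σ : Fin k → Bool, f (fun i => !σ i) := by
  exact (Fintype.sum_equiv (Equiv.piCongrRight fun _ : Fin k =>
    (⟨not, not, Bool.not_not, Bool.not_not⟩ : Bool ≃ Bool)) _ _ (fun σ => rfl)).symm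

-- singleton / symmetry case: the expected value of a single linear form is 0
lemma sum_single_zero {k : ℕ} (a : Fin k → ℝ) :
    ∑ σ : Fin k → Bool, ∑ i, (if σ i then (1:ℝ) else -1) * a i = 0 := by
  have h := sum_bool_neg (fun σ : Fin k → Bool => ∑ i, (if σ i then (1:ℝ) else -1) * a i)
  have h2 : ∀ σ : Fin k → Bool,
      (∑ i, (if (!σ i) then (1:ℝ) else -1) * a i)
        = -∑ i, (if σ i then (1:ℝ) else -1) * a i := by
    intro σ
    rw [← Finset.sum_neg_distrib]
    refine Finset.sum_congr rfl fun i _ => ?_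
    cases σ i <;> simp
  simp only [h2, Finset.sum_neg_distrib] at h
  linarith

-- MGF factorization and bound for a single vector
lemma mgf_bound {k : ℕ} (a : Fin k → ℝ) (t : ℝ) :
    ∑ σ : Fin k → Bool, Real.exp (t * ∑ i, (if σ i then (1:ℝ) else -1) * a i)
      ≤ 2 ^ k * Real.exp (t ^ 2 * (∑ i, a i ^ 2) / 2) := by
  have hfact : ∑ σ : Fin k → Bool, Real.exp (t * ∑ i, (if σ i then (1:ℝ) else -1) * a i)
      = ∏ i, (Real.exp (t * a i) + Real.exp (-(t * a i))) := by
    have : ∀ σ : Fin k → Bool, Real.exp (t * ∑ i, (if σ i then (1:ℝ) else -1) * a i)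
        = ∏ i, Real.exp (t * ((if σ i then (1:ℝ) else -1) * a i)) := by
      intro σ
      rw [Finset.mul_sum, Real.exp_sum]
    simp only [this]
    have := Finset.sum_prod_piFinset (Finset.univ : Finset Bool)
      (fun (i : Fin k) (b : Bool) => Real.exp (t * ((if b then (1:ℝ) else -1) * a i)))
    rw [← Fintype.piFinset_univ, this]
    refine Finset.prod_congr rfl fun i _ => ?_
    simp [Fintype.sum_bool]
  rw [hfact]
  have hstep : ∀ i : Fin k,
      Real.exp (t * a i) + Real.exp (-(t * a i)) ≤ 2 * Real.exp ((t * a i) ^ 2 / 2) := by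
    intro i
    have hc := Real.cosh_le_exp_half_sq (t * a i)
    rw [Real.cosh_eq] at hc
    linarith
  calc ∏ i, (Real.exp (t * a i) + Real.exp (-(t * a i)))
      ≤ ∏ i, (2 * Real.exp ((t * a i) ^ 2 / 2)) := by
        refine Finset.prod_le_prod (fun i _ => by positivity) (fun i _ => hstep i)
    _ = 2 ^ k * Real.exp (t ^ 2 * (∑ i, a i ^ 2) / 2) := by
        rw [Finset.prod_mul_distrib, Finset.prod_const, ← Real.exp_sum]
        simp [Finset.card_univ]
        congr 1
        rw [← Finset.sum_div, Finset.mul_sum]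
        congr 1
        refine Finset.sum_congr rfl fun i _ => ?_
        ring

set_option maxHeartbeats 1000000 in
-- main exponential-moment bound
lemma massart_core {k : ℕ} (A : Finset (Fin k → ℝ)) (hA : A.Nonempty) (t r : ℝ)
    (ht : 0 < t) (hr : ∀ a ∈ A, (∑ i, a i ^ 2) ≤ r ^ 2) :
    (1 / 2 ^ k : ℝ) * ∑ σ : Fin k → Bool,
        A.sup' hA (fun a => ∑ i, (if σ i then (1:ℝ) else -1) * a i)
      ≤ (Real.log A.card + t ^ 2 * r ^ 2 / 2) / t := by
  have hcard : (Fintype.card (Fin k → Bool) : ℝ) = 2 ^ k := by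
    simp [Fintype.card_fun]
  -- Jensen
  have jensen : Real.exp (t * ((1 / 2 ^ k : ℝ) * ∑ σ : Fin k → Bool,
        A.sup' hA (fun a => ∑ i, (if σ i then (1:ℝ) else -1) * a i)))
      ≤ (1 / 2 ^ k : ℝ) * ∑ σ : Fin k → Bool,
        Real.exp (t * A.sup' hA (fun a => ∑ i, (if σ i then (1:ℝ) else -1) * a i)) := by
    have h := convexOn_exp.map_sum_le (t := (Finset.univ : Finset (Fin k → Bool)))
      (w := fun _ => (1 / 2 ^ k : ℝ))
      (p := fun σ => t * A.sup' hA (fun a => ∑ i, (if σ i then (1:ℝ) else -1) * a i))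
      (fun i _ => by positivity)
      (by simp [Finset.sum_const, Finset.card_univ, hcard])
      (fun i _ => Set.mem_univ _)
    simp only [smul_eq_mul] at h
    calc Real.exp (t * ((1 / 2 ^ k : ℝ) * ∑ σ : Fin k → Bool,
            A.sup' hA (fun a => ∑ i, (if σ i then (1:ℝ) else -1) * a i)))
        = Real.exp (∑ σ : Fin k → Bool, (1 / 2 ^ k : ℝ) *
            (t * A.sup' hA (fun a => ∑ i, (if σ i then (1:ℝ) else -1) * a i))) := by
          congr 1
          rw [← Finset.mul_sum, ← Finset.mul_sum]
          ring
      _ ≤ ∑ σ : Fin k → Bool, (1 / 2 ^ k : ℝ) *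
            Real.exp (t * A.sup' hA (fun a => ∑ i, (if σ i then (1:ℝ) else -1) * a i)) := h
      _ = (1 / 2 ^ k : ℝ) * ∑ σ : Fin k → Bool,
            Real.exp (t * A.sup' hA (fun a => ∑ i, (if σ i then (1:ℝ) else -1) * a i)) := by
          rw [Finset.mul_sum]
  -- union bound
  have union : ∀ σ : Fin k → Bool,
      Real.exp (t * A.sup' hA (fun a => ∑ i, (if σ i then (1:ℝ) else -1) * a i))
        ≤ ∑ b ∈ A, Real.exp (t * ∑ i, (if σ i then (1:ℝ) else -1) * b i) := by
    intro σ
    obtain ⟨a, ha, hEq⟩ :=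
      A.exists_mem_eq_sup' hA (fun a => ∑ i, (if σ i then (1:ℝ) else -1) * a i)
    rw [hEq]
    apply Finset.single_le_sum (f := fun b : Fin k → ℝ =>
      Real.exp (t * ∑ i, (if σ i then (1:ℝ) else -1) * b i)) (fun b _ => (Real.exp_pos _).le) ha
  have mgf : ∀ a ∈ A,
      ∑ σ : Fin k → Bool, Real.exp (t * ∑ i, (if σ i then (1:ℝ) else -1) * a i)
        ≤ 2 ^ k * Real.exp (t ^ 2 * r ^ 2 / 2) := by
    intro a ha
    refine (mgf_bound a t).trans ?_
    have : Real.exp (t ^ 2 * (∑ i, a i ^ 2) / 2) ≤ Real.exp (t ^ 2 * r ^ 2 / 2) := by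
      apply Real.exp_le_exp.mpr
      have := hr a ha
      nlinarith [sq_nonneg t]
    nlinarith [Real.exp_pos (t ^ 2 * (∑ i, a i ^ 2) / 2), (pow_pos (by norm_num : (0:ℝ) < 2) k)]
  have key : Real.exp (t * ((1 / 2 ^ k : ℝ) * ∑ σ : Fin k → Bool,
        A.sup' hA (fun a => ∑ i, (if σ i then (1:ℝ) else -1) * a i)))
      ≤ A.card * Real.exp (t ^ 2 * r ^ 2 / 2) := by
    have h1 : ∑ σ : Fin k → Bool,
        Real.exp (t * A.sup' hA (fun a => ∑ i, (if σ i then (1:ℝ) else -1) * a i))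
        ≤ ∑ σ : Fin k → Bool, ∑ b ∈ A, Real.exp (t * ∑ i, (if σ i then (1:ℝ) else -1) * b i) :=
      Finset.sum_le_sum fun σ _ => union σ
    rw [Finset.sum_comm] at h1
    have h2 : ∑ b ∈ A, ∑ σ : Fin k → Bool,
        Real.exp (t * ∑ i, (if σ i then (1:ℝ) else -1) * b i)
        ≤ ∑ _b ∈ A, ((2:ℝ) ^ k * Real.exp (t ^ 2 * r ^ 2 / 2)) :=
      Finset.sum_le_sum mgf
    rw [Finset.sum_const, nsmul_eq_mul] at h2
    have hpow : (0:ℝ) < 2 ^ k := by positivity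
    refine jensen.trans ?_
    have h3 := h1.trans h2
    calc (1 / 2 ^ k : ℝ) * ∑ σ : Fin k → Bool,
          Real.exp (t * A.sup' hA (fun a => ∑ i, (if σ i then (1:ℝ) else -1) * a i))
        ≤ (1 / 2 ^ k : ℝ) * (A.card * ((2:ℝ) ^ k * Real.exp (t ^ 2 * r ^ 2 / 2))) :=
          mul_le_mul_of_nonneg_left h3 (by positivity)
      _ = A.card * Real.exp (t ^ 2 * r ^ 2 / 2) := by field_simp
  -- take logs
  have hNpos : (0:ℝ) < A.card := by exact_mod_cast Finset.card_pos.mpr hA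
  have hlog : t * ((1 / 2 ^ k : ℝ) * ∑ σ : Fin k → Bool,
        A.sup' hA (fun a => ∑ i, (if σ i then (1:ℝ) else -1) * a i))
      ≤ Real.log A.card + t ^ 2 * r ^ 2 / 2 := by
    have := Real.log_le_log (Real.exp_pos _) key
    rwa [Real.log_exp, Real.log_mul (ne_of_gt hNpos) (Real.exp_ne_zero _), Real.log_exp] at this
  rw [le_div_iff₀ ht]
  nlinarith [hlog]

/-- Massart's Lemma: if every vector of the finite nonempty `A ⊆ ℝ^k` has norm at most
`r`, then the Rademacher complexity of `A` is at most `(r/k)·√(2·log |A|)`. -/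
theorem stmt_12 (k : ℕ) (hk : 0 < k) (A : Finset (Fin k → ℝ)) (hA : A.Nonempty)
    (r : ℝ) (hr : ∀ a ∈ A, Real.sqrt (∑ i, a i ^ 2) ≤ r) :
    radComplexity k A hA ≤ (r / k) * Real.sqrt (2 * Real.log A.card) := by
  have hr0 : 0 ≤ r := by
    obtain ⟨a, ha⟩ := hA
    exact (Real.sqrt_nonneg _).trans (hr a ha)
  have hsq : ∀ a ∈ A, (∑ i, a i ^ 2) ≤ r ^ 2 := by
    intro a ha
    have h1 : 0 ≤ ∑ i, a i ^ 2 := Finset.sum_nonneg fun i _ => sq_nonneg _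
    nlinarith [hr a ha, Real.sq_sqrt h1, Real.sqrt_nonneg (∑ i, a i ^ 2)]
  have hrad : radComplexity k A hA = (1 / k : ℝ) * ((1 / 2 ^ k : ℝ) * ∑ σ : Fin k → Bool,
      A.sup' hA (fun a => ∑ i, (if σ i then (1:ℝ) else -1) * a i)) := by
    unfold radComplexity
    rw [← Finset.mul_sum]
    ring
  have hkpos : (0:ℝ) < k := by exact_mod_cast hk
  rw [hrad, show (r / k : ℝ) * Real.sqrt (2 * Real.log A.card)
      = (1 / k : ℝ) * (r * Real.sqrt (2 * Real.log A.card)) by ring]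
  refine mul_le_mul_of_nonneg_left ?_ (by positivity)
  -- main inequality: mean of sup ≤ r·√(2 log |A|)
  by_cases hone : A.card = 1
  · obtain ⟨a, rfl⟩ := Finset.card_eq_one.mp hone
    simp only [Finset.sup'_singleton, hone]
    rw [sum_single_zero a]
    simp
  · have hN1 : 1 ≤ A.card := Finset.card_pos.mpr hA
    have hN2 : 2 ≤ A.card := by omega
    have hlogpos : 0 < Real.log A.card := Real.log_pos (by exact_mod_cast hN2)
    by_cases hr' : r = 0
    · have hzero : ∀ σ : Fin k → Bool,
          A.sup' hA (fun a => ∑ i, (if σ i then (1:ℝ) else -1) * a i) = 0 := by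
        intro σ
        have : ∀ a ∈ A, (∑ i, (if σ i then (1:ℝ) else -1) * a i) = 0 := by
          intro a ha
          have h1 := hsq a ha
          rw [hr'] at h1
          have h2 : ∀ i, a i = 0 := by
            intro i
            have hle : a i ^ 2 ≤ ∑ j, a j ^ 2 := Finset.single_le_sum
              (f := fun j => a j ^ 2) (fun j _ => sq_nonneg _) (Finset.mem_univ i)
            have h3 : a i ^ 2 = 0 := le_antisymm (by nlinarith) (sq_nonneg _)
            exact pow_eq_zero_iff (by norm_num) |>.mp h3
          simp [h2]
        calc A.sup' hA (fun a => ∑ i, (if σ i then (1:ℝ) else -1) * a i)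
            = A.sup' hA (fun _ => (0:ℝ)) := Finset.sup'_congr hA rfl this
          _ = 0 := Finset.sup'_const hA 0
      simp only [hzero, Finset.sum_const, smul_zero, mul_zero, hr', zero_mul]
      exact le_refl 0
    · have hrpos : 0 < r := lt_of_le_of_ne hr0 (Ne.symm hr')
      set s : ℝ := Real.sqrt (2 * Real.log A.card) with hs
      have hspos : 0 < s := Real.sqrt_pos.mpr (by linarith)
      have hs2 : s ^ 2 = 2 * Real.log A.card := Real.sq_sqrt (by linarith)
      set t : ℝ := s / r with htdef
      have ht : 0 < t := by positivity
      refine (massart_core A hA t r ht hsq).trans ?_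
      have hkey : Real.log A.card + t ^ 2 * r ^ 2 / 2 = r * s * t := by
        rw [htdef]
        field_simp
        nlinarith [hs2]
      rw [hkey, mul_div_assoc, div_self (ne_of_gt ht), mul_one]
end
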